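/- Under balanced priors φ₀ = φ₁ and σ₀ < σ₁, at the balanced average-risk minimizer t*(1) the class-1 risk strictly exceeds the class-0 risk: R₁(t*(1)) > R₀(t*(1)). -/

import Mathlib

open ProbabilityTheory

/-- The standard normal cumulative distribution function Φ. -/
noncomputable def stdNormalCDF : ℝ → ℝ :=
  fun x => ProbabilityTheory.cdf (gaussianReal 0 1) x

lemma stdNormalCDF_strictMono : StrictMono stdNormalCDF := by
  intro x y hxy
  unfold stdNormalCDF
  rw [cdf_eq_real, cdf_eq_real, MeasureTheory.measureReal_def, MeasureTheory.measureReal_def]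
  have hIic : Set.Iic y = Set.Iic x ∪ Set.Ioc x y := (Set.Iic_union_Ioc_eq_Iic hxy.le).symm
  have hne : (gaussianReal 0 1) (Set.Ioc x y) ≠ 0 := by
    intro h
    have habs := ProbabilityTheory.gaussianReal_absolutelyContinuous' (0 : ℝ) (v := 1) one_ne_zero
    have : (MeasureTheory.volume : MeasureTheory.Measure ℝ) (Set.Ioc x y) = 0 := habs h
    simp [Real.volume_Ioc, hxy] at this
    linarith [this]
  have hlt : (gaussianReal 0 1) (Set.Iic x) < (gaussianReal 0 1) (Set.Iic y) := by
    rw [hIic]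
    have hdisj : Disjoint (Set.Iic x) (Set.Ioc x y) := by
      rw [Set.disjoint_left]
      intro a ha h
      exact absurd h.1 (not_lt.mpr ha)
    rw [MeasureTheory.measure_union hdisj measurableSet_Ioc]
    have h1 : (gaussianReal 0 1) (Set.Iic x) ≠ ⊤ := MeasureTheory.measure_ne_top _ _
    have h2 : 0 < (gaussianReal 0 1) (Set.Ioc x y) := pos_iff_ne_zero.mpr hne
    exact ENNReal.lt_add_right h1 hne
  exact ENNReal.toReal_lt_toReal (MeasureTheory.measure_ne_top _ _)
    (MeasureTheory.measure_ne_top _ _) |>.mpr hlt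

/-- Under balanced priors (`φ₀ = φ₁`) with `μ₀ < μ₁` and `0 < σ₀ < σ₁`, at the balanced
average-risk minimizer `t*(1)` the class-1 risk strictly exceeds the class-0 risk:
`R₁(t*(1)) > R₀(t*(1))`, where `R₀(t) = Φ((μ₀−t)/σ₀)` and `R₁(t) = Φ((t−μ₁)/σ₁)`. -/
theorem stmt_17 (μ₀ μ₁ σ₀ σ₁ tstar : ℝ)
    (hσ₀ : 0 < σ₀) (hσ : σ₀ < σ₁) (hμ : μ₀ < μ₁)
    (htstar : tstar = (μ₀ * σ₁ ^ 2 - μ₁ * σ₀ ^ 2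
        + σ₀ * σ₁ * Real.sqrt ((μ₀ - μ₁) ^ 2
            + 2 * (σ₁ ^ 2 - σ₀ ^ 2) * Real.log (σ₁ / σ₀)))
      / (σ₁ ^ 2 - σ₀ ^ 2)) :
    stdNormalCDF ((μ₀ - tstar) / σ₀) < stdNormalCDF ((tstar - μ₁) / σ₁) := by
  have hσ₁ : 0 < σ₁ := hσ₀.trans hσ
  have hD : 0 < σ₁ ^ 2 - σ₀ ^ 2 := by nlinarith
  set A := (μ₀ - μ₁) ^ 2 + 2 * (σ₁ ^ 2 - σ₀ ^ 2) * Real.log (σ₁ / σ₀) with hA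
  have hlog : 0 < Real.log (σ₁ / σ₀) := Real.log_pos (by rw [lt_div_iff₀ hσ₀]; linarith)
  have hAgt : (μ₁ - μ₀) ^ 2 < A := by rw [hA]; nlinarith
  have hsqrt : μ₁ - μ₀ < Real.sqrt A := by
    have := Real.sqrt_lt_sqrt (sq_nonneg (μ₁ - μ₀)) hAgt
    rwa [Real.sqrt_sq (by linarith : (0:ℝ) ≤ μ₁ - μ₀)] at this
  have htD : tstar * (σ₁ ^ 2 - σ₀ ^ 2)
      = μ₀ * σ₁ ^ 2 - μ₁ * σ₀ ^ 2 + σ₀ * σ₁ * Real.sqrt A := by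
    rw [htstar]; field_simp
  apply stdNormalCDF_strictMono
  rw [div_lt_div_iff₀ hσ₀ hσ₁]
  nlinarith [mul_pos hσ₀ hσ₁, mul_pos (mul_pos hσ₀ hσ₁) (sub_pos.mpr hsqrt)]
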